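/- Let a, b > 0 and g ∈ L²(ℝ) be such that the Gabor system G = (E_{mb} T_{na} g)_{(m,n)∈ℤ²} is a frame for L²(ℝ), and let g^d ∈ L²(ℝ) be such that G^d = (E_{mb} T_{na} g^d)_{(m,n)∈ℤ²} is a dual Gabor frame of G. Let A be a bounded operator on L²(ℝ) with ‖Id − A‖ < 1 that commutes with E_b, E_{−b}, T_a and T_{−a}. Set g^{ad} = A* S_G^{-1} g − g + S_G(g^d), where S_G is the frame operator of G. Then G^{ad} = (E_{mb} T_{na} g^{ad})_{(m,n)∈ℤ²} is an approximately dual frame of G, and T_G U_{G^{ad}} = A. -/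

import Mathlib

noncomputable section

open ContinuousLinearMap MeasureTheory
open scoped ComplexInnerProductSpace ENNReal

/-- The Hilbert space `L²(ℝ)` (complex valued, Lebesgue measure). -/
abbrev L2R : Type := MeasureTheory.Lp ℂ 2 (MeasureTheory.volume : MeasureTheory.Measure ℝ)

/-- The sequence space `ℓ²(ℤ × ℤ)`, indexing Gabor systems. -/
abbrev GLtwo : Type := lp (fun _ : ℤ × ℤ => ℂ) 2

/-- A family `φ` indexed by `ℤ × ℤ` is a Bessel family with bound `M`:
`∑_{m,n} |⟨f, φ_{m,n}⟩|² ≤ M‖f‖²`.  (Mathlib inner products are conjugate-linear in the first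
slot, so `⟪φ i, f⟫` corresponds to the paper's `⟨f, φ_i⟩`.) -/
def IsBesselBoundZ (φ : ℤ × ℤ → L2R) (M : ℝ) : Prop :=
  ∀ f : L2R, Summable (fun i : ℤ × ℤ => ‖(⟪φ i, f⟫ : ℂ)‖ ^ 2) ∧
    ∑' i : ℤ × ℤ, ‖(⟪φ i, f⟫ : ℂ)‖ ^ 2 ≤ M * ‖f‖ ^ 2

/-- A family `φ` indexed by `ℤ × ℤ` is a frame with bounds `m`, `M`. -/
def IsFrameWithZ (φ : ℤ × ℤ → L2R) (m M : ℝ) : Prop :=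
  0 < m ∧ IsBesselBoundZ φ M ∧
    ∀ f : L2R, m * ‖f‖ ^ 2 ≤ ∑' i : ℤ × ℤ, ‖(⟪φ i, f⟫ : ℂ)‖ ^ 2

/-- A family `φ` indexed by `ℤ × ℤ` is a frame. -/
def IsFrameZ (φ : ℤ × ℤ → L2R) : Prop := ∃ m M, IsFrameWithZ φ m M

/-- `U` is the analysis operator of the family `φ`; the synthesis operator is `adjoint U`
and the frame operator is `adjoint U ∘L U`. -/
def IsAnalysisOpZ (φ : ℤ × ℤ → L2R) (U : L2R →L[ℂ] GLtwo) : Prop :=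
  ∀ (f : L2R) (i : ℤ × ℤ), U f i = (⟪φ i, f⟫ : ℂ)

namespace Stmt19Aux

lemma ae_comp_sub (α : ℝ) {g g' : ℝ → ℂ} (h : g =ᵐ[volume] g') :
    (fun x => g (x - α)) =ᵐ[volume] fun x => g' (x - α) :=
  (measurePreserving_sub_right volume α).quasiMeasurePreserving.ae_eq_comp h

variable (E Tr : ℝ → (L2R →L[ℂ] L2R))

lemma Ecomp
    (hE : ∀ (β : ℝ) (f : L2R), (E β f : ℝ → ℂ) =ᵐ[volume]
      fun x => Complex.exp (((2 * Real.pi * β * x : ℝ) : ℂ) * Complex.I) * f x)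
    (β γ : ℝ) : E β ∘L E γ = E (β + γ) := by
  refine ContinuousLinearMap.ext fun f => ?_
  refine Lp.ext ?_
  show (E β (E γ f) : ℝ → ℂ) =ᵐ[volume] (E (β + γ) f : ℝ → ℂ)
  filter_upwards [hE β (E γ f), hE γ f, hE (β + γ) f] with x hx1 hx2 hx3
  rw [hx1, hx2, hx3, ← mul_assoc, ← Complex.exp_add]
  congr 2
  push_cast
  ring

lemma Ezero
    (hE : ∀ (β : ℝ) (f : L2R), (E β f : ℝ → ℂ) =ᵐ[volume]
      fun x => Complex.exp (((2 * Real.pi * β * x : ℝ) : ℂ) * Complex.I) * f x) :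
    E 0 = 1 := by
  refine ContinuousLinearMap.ext fun f => ?_
  refine Lp.ext ?_
  show (E 0 f : ℝ → ℂ) =ᵐ[volume] (f : ℝ → ℂ)
  filter_upwards [hE 0 f] with x hx
  rw [hx]
  norm_num

lemma Trcomp
    (hTr : ∀ (α : ℝ) (f : L2R), (Tr α f : ℝ → ℂ) =ᵐ[volume] fun x => f (x - α))
    (α γ : ℝ) : Tr α ∘L Tr γ = Tr (α + γ) := by
  refine ContinuousLinearMap.ext fun f => ?_
  refine Lp.ext ?_
  show (Tr α (Tr γ f) : ℝ → ℂ) =ᵐ[volume] (Tr (α + γ) f : ℝ → ℂ)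
  have h2 : (fun x => (Tr γ f : ℝ → ℂ) (x - α)) =ᵐ[volume] fun x => f (x - α - γ) :=
    ae_comp_sub α (hTr γ f)
  filter_upwards [hTr α (Tr γ f), h2, hTr (α + γ) f] with x hx1 hx2 hx3
  rw [hx1, hx2, hx3, sub_sub]

lemma Trzero
    (hTr : ∀ (α : ℝ) (f : L2R), (Tr α f : ℝ → ℂ) =ᵐ[volume] fun x => f (x - α)) :
    Tr 0 = 1 := by
  refine ContinuousLinearMap.ext fun f => ?_
  refine Lp.ext ?_
  show (Tr 0 f : ℝ → ℂ) =ᵐ[volume] (f : ℝ → ℂ)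
  filter_upwards [hTr 0 f] with x hx
  rw [hx, sub_zero]

lemma weyl
    (hE : ∀ (β : ℝ) (f : L2R), (E β f : ℝ → ℂ) =ᵐ[volume]
      fun x => Complex.exp (((2 * Real.pi * β * x : ℝ) : ℂ) * Complex.I) * f x)
    (hTr : ∀ (α : ℝ) (f : L2R), (Tr α f : ℝ → ℂ) =ᵐ[volume] fun x => f (x - α))
    (α β : ℝ) :
    Tr α ∘L E β =
      Complex.exp (-(((2 * Real.pi * β * α : ℝ) : ℂ) * Complex.I)) • (E β ∘L Tr α) := by
  refine ContinuousLinearMap.ext fun f => ?_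
  refine Lp.ext ?_
  have h2 : (fun x => (E β f : ℝ → ℂ) (x - α)) =ᵐ[volume]
      fun x => Complex.exp (((2 * Real.pi * β * (x - α) : ℝ) : ℂ) * Complex.I) * f (x - α) :=
    ae_comp_sub α (hE β f)
  have h5 : ((Complex.exp (-(((2 * Real.pi * β * α : ℝ) : ℂ) * Complex.I)) •
      (E β (Tr α f)) : L2R) : ℝ → ℂ) =ᵐ[volume]
      fun x => Complex.exp (-(((2 * Real.pi * β * α : ℝ) : ℂ) * Complex.I)) *
        (E β (Tr α f) : ℝ → ℂ) x := Lp.coeFn_smul _ _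
  calc (⇑((Tr α ∘L E β) f) : ℝ → ℂ)
      =ᵐ[volume] fun x => Complex.exp (((2 * Real.pi * β * (x - α) : ℝ) : ℂ) * Complex.I)
        * (f : ℝ → ℂ) (x - α) := (hTr α (E β f)).trans h2
    _ =ᵐ[volume] fun x => Complex.exp (-(((2 * Real.pi * β * α : ℝ) : ℂ) * Complex.I)) *
        ((E β (Tr α f) : ℝ → ℂ) x) := by
        filter_upwards [hE β (Tr α f), hTr α f] with x hx3 hx4
        rw [hx3, hx4, ← mul_assoc, ← Complex.exp_add]
        congr 2
        push_cast
        ring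
    _ =ᵐ[volume] _ := h5.symm

lemma Einner
    (hE : ∀ (β : ℝ) (f : L2R), (E β f : ℝ → ℂ) =ᵐ[volume]
      fun x => Complex.exp (((2 * Real.pi * β * x : ℝ) : ℂ) * Complex.I) * f x)
    (β : ℝ) (f h : L2R) : (⟪E β f, E β h⟫ : ℂ) = ⟪f, h⟫ := by
  rw [MeasureTheory.L2.inner_def, MeasureTheory.L2.inner_def]
  refine integral_congr_ae ?_
  filter_upwards [hE β f, hE β h] with x hx1 hx2
  rw [hx1, hx2]
  simp only [RCLike.inner_apply, map_mul]
  have : (starRingEnd ℂ) (Complex.exp (((2 * Real.pi * β * x : ℝ) : ℂ) * Complex.I)) *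
      Complex.exp (((2 * Real.pi * β * x : ℝ) : ℂ) * Complex.I) = 1 := by
    rw [← Complex.exp_conj, ← Complex.exp_add, map_mul, Complex.conj_I, Complex.conj_ofReal]
    have : ((2 * Real.pi * β * x : ℝ) : ℂ) * -Complex.I +
        ((2 * Real.pi * β * x : ℝ) : ℂ) * Complex.I = 0 := by ring
    rw [this, Complex.exp_zero]
  linear_combination ((starRingEnd ℂ) ((f : ℝ → ℂ) x) * (h : ℝ → ℂ) x) * this

lemma Trinner
    (hTr : ∀ (α : ℝ) (f : L2R), (Tr α f : ℝ → ℂ) =ᵐ[volume] fun x => f (x - α))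
    (α : ℝ) (f h : L2R) : (⟪Tr α f, Tr α h⟫ : ℂ) = ⟪f, h⟫ := by
  rw [MeasureTheory.L2.inner_def, MeasureTheory.L2.inner_def]
  have : (∫ x, (⟪(Tr α f : ℝ → ℂ) x, (Tr α h : ℝ → ℂ) x⟫ : ℂ) ∂volume)
      = ∫ x, (⟪(f : ℝ → ℂ) (x - α), (h : ℝ → ℂ) (x - α)⟫ : ℂ) ∂volume := by
    refine integral_congr_ae ?_
    filter_upwards [hTr α f, hTr α h] with x hx1 hx2
    rw [hx1, hx2]
  rw [this]
  exact integral_sub_right_eq_self (fun x => (⟪(f : ℝ → ℂ) x, (h : ℝ → ℂ) x⟫ : ℂ)) α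

variable (W : ℝ → (L2R →L[ℂ] L2R))

lemma fam_cancel (hcomp : ∀ β γ, W β ∘L W γ = W (β + γ)) (hzero : W 0 = 1) (β : ℝ) (f : L2R) :
    W β (W (-β) f) = f := by
  have : (W β ∘L W (-β)) f = f := by rw [hcomp, add_neg_cancel, hzero]; rfl
  simpa using this

lemma fam_adj (hcomp : ∀ β γ, W β ∘L W γ = W (β + γ)) (hzero : W 0 = 1)
    (hinner : ∀ (β : ℝ) (f h : L2R), (⟪W β f, W β h⟫ : ℂ) = ⟪f, h⟫)
    (β : ℝ) : adjoint (W β) = W (-β) := by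
  symm
  rw [ContinuousLinearMap.eq_adjoint_iff]
  intro x y
  calc (⟪W (-β) x, y⟫ : ℂ) = ⟪W β (W (-β) x), W β y⟫ := (hinner β _ _).symm
    _ = ⟪x, W β y⟫ := by rw [fam_cancel W hcomp hzero]

lemma fam_comm (hcomp : ∀ β γ, W β ∘L W γ = W (β + γ)) (hzero : W 0 = 1)
    (A : L2R →L[ℂ] L2R) (c : ℝ)
    (h1 : A ∘L W c = W c ∘L A) (h2 : A ∘L W (-c) = W (-c) ∘L A) (m : ℤ) :
    A ∘L W (m * c) = W (m * c) ∘L A := by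
  induction m using Int.induction_on with
  | zero => simp only [Int.cast_zero, zero_mul, hzero, one_def, comp_id, id_comp]
  | succ n ih =>
    have e : ((n + 1 : ℤ) : ℝ) * c = (n : ℤ) * c + c := by push_cast; ring
    rw [e, ← hcomp, ← comp_assoc, ih, comp_assoc, h1, ← comp_assoc]
  | pred n ih =>
    have e : ((-n - 1 : ℤ) : ℝ) * c = ((-n : ℤ) : ℝ) * c + -c := by push_cast; ring
    rw [e, ← hcomp, ← comp_assoc, ih, comp_assoc, h2, ← comp_assoc]

lemma conj_exp_mul_I (r : ℝ) :
    (starRingEnd ℂ) (Complex.exp ((r : ℂ) * Complex.I)) *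
      Complex.exp ((r : ℂ) * Complex.I) = 1 := by
  rw [← Complex.exp_conj, ← Complex.exp_add, map_mul, Complex.conj_I, Complex.conj_ofReal]
  have : (r : ℂ) * -Complex.I + (r : ℂ) * Complex.I = 0 := by ring
  rw [this, Complex.exp_zero]

end Stmt19Aux

set_option maxHeartbeats 2000000 in
/-- Let `a, b > 0`, let `E β` be modulation by `e^{2πiβx}` and `Tr α` be
translation by `α` on `L²(ℝ)`.  Suppose the Gabor system `G = (E (mb) (Tr (na) g))_{m,n}` is a
frame with analysis operator `U` (frame operator `S_G = adjoint U ∘L U`, with inverse `Sinv`),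
and `G^d = (E (mb) (Tr (na) g^d))_{m,n}` is a dual Gabor frame of `G` (analysis operator `Ud`,
`T_G U_{G^d} = Id`).  Let `A` be bounded with `‖Id - A‖ < 1`, commuting with `E b`, `E (-b)`,
`Tr a` and `Tr (-a)`, and set `g^{ad} = A* S_G⁻¹ g - g + S_G g^d`.  Then the Gabor system
`G^{ad} = (E (mb) (Tr (na) g^{ad}))_{m,n}` is an approximately dual frame of `G` (a Bessel
family whose analysis operator `V` satisfies `‖Id - T_G V‖ < 1`) with `T_G U_{G^{ad}} = A`. -/
theorem statement19 (a b : ℝ) (ha : 0 < a) (hb : 0 < b)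
    (E Tr : ℝ → (L2R →L[ℂ] L2R))
    (hE : ∀ (β : ℝ) (f : L2R),
      (E β f : ℝ → ℂ) =ᵐ[volume]
        fun x => Complex.exp (((2 * Real.pi * β * x : ℝ) : ℂ) * Complex.I) * f x)
    (hTr : ∀ (α : ℝ) (f : L2R), (Tr α f : ℝ → ℂ) =ᵐ[volume] fun x => f (x - α))
    (g gd : L2R)
    (hG : IsFrameZ (fun i : ℤ × ℤ => E (i.1 * b) (Tr (i.2 * a) g)))
    (hGd : IsFrameZ (fun i : ℤ × ℤ => E (i.1 * b) (Tr (i.2 * a) gd)))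
    (U Ud : L2R →L[ℂ] GLtwo)
    (hU : IsAnalysisOpZ (fun i : ℤ × ℤ => E (i.1 * b) (Tr (i.2 * a) g)) U)
    (hUd : IsAnalysisOpZ (fun i : ℤ × ℤ => E (i.1 * b) (Tr (i.2 * a) gd)) Ud)
    (hdual : adjoint U ∘L Ud = 1)
    (Sinv : L2R →L[ℂ] L2R)
    (hS1 : (adjoint U ∘L U) ∘L Sinv = 1) (hS2 : Sinv ∘L (adjoint U ∘L U) = 1)
    (A : L2R →L[ℂ] L2R) (hA : ‖(1 : L2R →L[ℂ] L2R) - A‖ < 1)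
    (hAEb : A ∘L E b = E b ∘L A) (hAEb' : A ∘L E (-b) = E (-b) ∘L A)
    (hATa : A ∘L Tr a = Tr a ∘L A) (hATa' : A ∘L Tr (-a) = Tr (-a) ∘L A)
    (gad : L2R) (hgad : gad = adjoint A (Sinv g) - g + (adjoint U ∘L U) gd) :
    ∃ (M : ℝ) (V : L2R →L[ℂ] GLtwo),
      IsBesselBoundZ (fun i : ℤ × ℤ => E (i.1 * b) (Tr (i.2 * a) gad)) M ∧
      IsAnalysisOpZ (fun i : ℤ × ℤ => E (i.1 * b) (Tr (i.2 * a) gad)) V ∧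
      ‖(1 : L2R →L[ℂ] L2R) - adjoint U ∘L V‖ < 1 ∧
      adjoint U ∘L V = A := by
  
  classical
  have hEcomp := Stmt19Aux.Ecomp E hE
  have hE0 := Stmt19Aux.Ezero E hE
  have hTrcomp := Stmt19Aux.Trcomp Tr hTr
  have hTr0 := Stmt19Aux.Trzero Tr hTr
  have hEinner := Stmt19Aux.Einner E hE
  have hTrinner := Stmt19Aux.Trinner Tr hTr
  have hEadj : ∀ β, adjoint (E β) = E (-β) := Stmt19Aux.fam_adj E hEcomp hE0 hEinner
  have hTradj : ∀ α, adjoint (Tr α) = Tr (-α) := Stmt19Aux.fam_adj Tr hTrcomp hTr0 hTrinner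
  have hEcan : ∀ (β : ℝ) (f : L2R), E β (E (-β) f) = f := Stmt19Aux.fam_cancel E hEcomp hE0
  have hTrcan : ∀ (α : ℝ) (f : L2R), Tr α (Tr (-α) f) = f := Stmt19Aux.fam_cancel Tr hTrcomp hTr0
  set S : L2R →L[ℂ] L2R := adjoint U ∘L U with hSdef
  set P : ℤ × ℤ → (L2R →L[ℂ] L2R) := fun i => E (i.1 * b) ∘L Tr (i.2 * a) with hPdef
  have hU' : ∀ (f : L2R) (i : ℤ × ℤ), U f i = (⟪P i g, f⟫ : ℂ) := hU
  have hUd' : ∀ (f : L2R) (i : ℤ × ℤ), Ud f i = (⟪P i gd, f⟫ : ℂ) := hUd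
  -- adjoint of P
  have hPadj : ∀ i : ℤ × ℤ, adjoint (P i) = Tr (-(i.2 * a)) ∘L E (-(i.1 * b)) := by
    intro i
    show adjoint (E (i.1 * b) ∘L Tr (i.2 * a)) = _
    rw [adjoint_comp, hEadj, hTradj]
  -- P i is unitary
  have hPinv1 : ∀ i : ℤ × ℤ, P i ∘L adjoint (P i) = 1 := by
    intro i
    rw [hPadj i]
    refine ContinuousLinearMap.ext fun f => ?_
    simp only [comp_apply, one_apply]
    show E (i.1 * b) (Tr (i.2 * a) (Tr (-(i.2 * a)) (E (-(i.1 * b)) f))) = f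
    rw [hTrcan, hEcan]
  have hPinv2 : ∀ i : ℤ × ℤ, adjoint (P i) ∘L P i = 1 := by
    intro i
    rw [hPadj i]
    refine ContinuousLinearMap.ext fun f => ?_
    simp only [comp_apply, one_apply]
    show Tr (-(i.2 * a)) (E (-(i.1 * b)) (E (i.1 * b) (Tr (i.2 * a) f))) = f
    have h1 : E (-(i.1 * b)) (E (i.1 * b) (Tr (i.2 * a) f)) = Tr (i.2 * a) f := by
      have := hEcan (-(i.1 * b)) (Tr (i.2 * a) f)
      rwa [neg_neg] at this
    have h2 : Tr (-(i.2 * a)) (Tr (i.2 * a) f) = f := by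
      have := hTrcan (-(i.2 * a)) f
      rwa [neg_neg] at this
    rw [h1, h2]
  -- A commutes with P i
  have hAE : ∀ m : ℤ, A ∘L E (m * b) = E (m * b) ∘L A :=
    Stmt19Aux.fam_comm E hEcomp hE0 A b hAEb hAEb'
  have hATr : ∀ n : ℤ, A ∘L Tr (n * a) = Tr (n * a) ∘L A :=
    Stmt19Aux.fam_comm Tr hTrcomp hTr0 A a hATa hATa'
  have hAP : ∀ i : ℤ × ℤ, A ∘L P i = P i ∘L A := by
    intro i
    show A ∘L (E (i.1 * b) ∘L Tr (i.2 * a)) = (E (i.1 * b) ∘L Tr (i.2 * a)) ∘L A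
    rw [← comp_assoc, hAE, comp_assoc, hATr, ← comp_assoc]
  -- adjoint A commutes with P i
  have hadjcomm : ∀ (B C : L2R →L[ℂ] L2R), B ∘L C = C ∘L B →
      adjoint C ∘L adjoint B = adjoint B ∘L adjoint C := by
    intro B C h
    have := congrArg adjoint h
    rwa [adjoint_comp, adjoint_comp] at this
  have hA'Eb : adjoint A ∘L E b = E b ∘L adjoint A := by
    have := hadjcomm A (E (-b)) hAEb'
    rw [hEadj, neg_neg] at this
    exact this.symm
  have hA'Eb' : adjoint A ∘L E (-b) = E (-b) ∘L adjoint A := by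
    have := hadjcomm A (E b) hAEb
    rw [hEadj] at this
    exact this.symm
  have hA'Ta : adjoint A ∘L Tr a = Tr a ∘L adjoint A := by
    have := hadjcomm A (Tr (-a)) hATa'
    rw [hTradj, neg_neg] at this
    exact this.symm
  have hA'Ta' : adjoint A ∘L Tr (-a) = Tr (-a) ∘L adjoint A := by
    have := hadjcomm A (Tr a) hATa
    rw [hTradj] at this
    exact this.symm
  have hA'P : ∀ i : ℤ × ℤ, adjoint A ∘L P i = P i ∘L adjoint A := by
    intro i
    show adjoint A ∘L (E (i.1 * b) ∘L Tr (i.2 * a)) = (E (i.1 * b) ∘L Tr (i.2 * a)) ∘L adjoint A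
    rw [← comp_assoc, Stmt19Aux.fam_comm E hEcomp hE0 (adjoint A) b hA'Eb hA'Eb',
      comp_assoc, Stmt19Aux.fam_comm Tr hTrcomp hTr0 (adjoint A) a hA'Ta hA'Ta', ← comp_assoc]
  -- frame operator via coefficients
  have hUinner : ∀ u v : L2R, (⟪S u, v⟫ : ℂ)
      = ∑' i : ℤ × ℤ, (starRingEnd ℂ) (⟪P i g, u⟫ : ℂ) * (⟪P i g, v⟫ : ℂ) := by
    intro u v
    have h1 : (⟪S u, v⟫ : ℂ) = ⟪U u, U v⟫ := adjoint_inner_left U v (U u)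
    rw [h1, lp.inner_eq_tsum]
    refine tsum_congr fun i => ?_
    rw [RCLike.inner_apply, hU' u i, hU' v i, mul_comm]
  -- commutation of shifted windows up to a unimodular phase
  have hPP : ∀ i j : ℤ × ℤ, ∃ w : ℂ, (starRingEnd ℂ) w * w = 1 ∧
      adjoint (P j) ∘L P i = w • P (i - j) := by
    intro i j
    refine ⟨Complex.exp (-(((2 * Real.pi * (-((j.1 : ℝ) * b) + (i.1 : ℝ) * b) *
      -((j.2 : ℝ) * a) : ℝ) : ℂ) * Complex.I)), ?_, ?_⟩
    · rw [show -(((2 * Real.pi * (-((j.1 : ℝ) * b) + (i.1 : ℝ) * b) *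
          -((j.2 : ℝ) * a) : ℝ) : ℂ) * Complex.I)
          = ((-(2 * Real.pi * (-((j.1 : ℝ) * b) + (i.1 : ℝ) * b) *
          -((j.2 : ℝ) * a)) : ℝ) : ℂ) * Complex.I by push_cast; ring]
      exact Stmt19Aux.conj_exp_mul_I _
    · have hptarget : P (i - j) =
          E (-((j.1 : ℝ) * b) + (i.1 : ℝ) * b) ∘L Tr (-((j.2 : ℝ) * a) + (i.2 : ℝ) * a) := by
        show E (((i - j).1 : ℝ) * b) ∘L Tr (((i - j).2 : ℝ) * a) = _
        rw [show (((i - j).1 : ℤ) : ℝ) * b = -((j.1 : ℝ) * b) + (i.1 : ℝ) * b by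
            rw [Prod.fst_sub]; push_cast; ring,
          show (((i - j).2 : ℤ) : ℝ) * a = -((j.2 : ℝ) * a) + (i.2 : ℝ) * a by
            rw [Prod.snd_sub]; push_cast; ring]
      rw [hPadj j, hptarget]
      show (Tr (-((j.2 : ℝ) * a)) ∘L E (-((j.1 : ℝ) * b))) ∘L
          (E ((i.1 : ℝ) * b) ∘L Tr ((i.2 : ℝ) * a)) = _
      rw [comp_assoc,
        ← comp_assoc (E (-((j.1 : ℝ) * b))) (E ((i.1 : ℝ) * b)) (Tr ((i.2 : ℝ) * a)),
        hEcomp,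
        ← comp_assoc (Tr (-((j.2 : ℝ) * a))),
        Stmt19Aux.weyl E Tr hE hTr (-((j.2 : ℝ) * a)) (-((j.1 : ℝ) * b) + (i.1 : ℝ) * b),
        smul_comp, comp_assoc, hTrcomp]
  -- the frame operator commutes with the time-frequency shifts
  have hSPkey : ∀ j : ℤ × ℤ, adjoint (P j) ∘L (S ∘L P j) = S := by
    intro j
    refine ContinuousLinearMap.ext fun f => ?_
    refine ext_inner_right ℂ fun h => ?_
    have l1 : (adjoint (P j) ∘L (S ∘L P j)) f = adjoint (P j) (S (P j f)) := rfl
    rw [l1, adjoint_inner_left, hUinner, hUinner]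
    have step : ∀ i : ℤ × ℤ,
        (starRingEnd ℂ) (⟪P i g, P j f⟫ : ℂ) * (⟪P i g, P j h⟫ : ℂ)
          = (starRingEnd ℂ) (⟪P (i - j) g, f⟫ : ℂ) * (⟪P (i - j) g, h⟫ : ℂ) := by
      intro i
      obtain ⟨w, hw, hcom⟩ := hPP i j
      have hap : adjoint (P j) (P i g) = w • P (i - j) g := by
        have := congrArg (fun (T : L2R →L[ℂ] L2R) => T g) hcom
        simpa using this
      have e1 : (⟪P i g, P j f⟫ : ℂ) = (starRingEnd ℂ) w * ⟪P (i - j) g, f⟫ := by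
        rw [← adjoint_inner_left (P j), hap, inner_smul_left]
      have e2 : (⟪P i g, P j h⟫ : ℂ) = (starRingEnd ℂ) w * ⟪P (i - j) g, h⟫ := by
        rw [← adjoint_inner_left (P j), hap, inner_smul_left]
      rw [e1, e2, map_mul, Complex.conj_conj]
      calc w * (starRingEnd ℂ) (⟪P (i - j) g, f⟫ : ℂ) *
            ((starRingEnd ℂ) w * (⟪P (i - j) g, h⟫ : ℂ))
          = ((starRingEnd ℂ) w * w) *
            ((starRingEnd ℂ) (⟪P (i - j) g, f⟫ : ℂ) * (⟪P (i - j) g, h⟫ : ℂ)) := by ring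
        _ = _ := by rw [hw, one_mul]
    calc (∑' i : ℤ × ℤ, (starRingEnd ℂ) (⟪P i g, P j f⟫ : ℂ) * (⟪P i g, P j h⟫ : ℂ))
        = ∑' i : ℤ × ℤ, (starRingEnd ℂ) (⟪P (i - j) g, f⟫ : ℂ) * (⟪P (i - j) g, h⟫ : ℂ) :=
          tsum_congr step
      _ = ∑' i : ℤ × ℤ, (fun k : ℤ × ℤ =>
            (starRingEnd ℂ) (⟪P k g, f⟫ : ℂ) * (⟪P k g, h⟫ : ℂ)) ((Equiv.subRight j) i) := rfl
      _ = ∑' i : ℤ × ℤ, (starRingEnd ℂ) (⟪P i g, f⟫ : ℂ) * (⟪P i g, h⟫ : ℂ) :=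
          Equiv.tsum_eq (Equiv.subRight j)
            (fun k : ℤ × ℤ => (starRingEnd ℂ) (⟪P k g, f⟫ : ℂ) * (⟪P k g, h⟫ : ℂ))
  have hSP : ∀ j : ℤ × ℤ, S ∘L P j = P j ∘L S := by
    intro j
    calc S ∘L P j = (P j ∘L adjoint (P j)) ∘L (S ∘L P j) := by rw [hPinv1 j, one_def, id_comp]
      _ = P j ∘L (adjoint (P j) ∘L (S ∘L P j)) := comp_assoc _ _ _
      _ = P j ∘L S := by rw [hSPkey j]
  -- pointwise facts
  have hS1f : ∀ f : L2R, S (Sinv f) = f := fun f => by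
    have := congrArg (fun (T : L2R →L[ℂ] L2R) => T f) hS1
    simpa using this
  have hS2f : ∀ f : L2R, Sinv (S f) = f := fun f => by
    have := congrArg (fun (T : L2R →L[ℂ] L2R) => T f) hS2
    simpa using this
  have hSPf : ∀ (j : ℤ × ℤ) (x : L2R), S (P j x) = P j (S x) := fun j x => by
    have := congrArg (fun (T : L2R →L[ℂ] L2R) => T x) (hSP j)
    simpa using this
  have hSinvPf : ∀ (j : ℤ × ℤ) (x : L2R), Sinv (P j x) = P j (Sinv x) := by
    intro j x
    have h1 : P j x = S (P j (Sinv x)) := by rw [hSPf, hS1f]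
    rw [h1, hS2f]
  have hSadj : adjoint S = S := by rw [hSdef, adjoint_comp, adjoint_adjoint]
  have hSinner : ∀ x y : L2R, (⟪S x, y⟫ : ℂ) = ⟪x, S y⟫ := by
    intro x y
    conv_lhs => rw [← hSadj]
    exact adjoint_inner_left S y x
  have hSinvS1 : adjoint Sinv ∘L S = 1 := by
    have h := congrArg adjoint hS1
    rw [adjoint_comp, hSadj] at h
    rwa [show adjoint (1 : L2R →L[ℂ] L2R) = 1 from by rw [one_def]; exact adjoint_id] at h
  have hSinvadj : adjoint Sinv = Sinv := by
    refine ContinuousLinearMap.ext fun f => ?_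
    have h1 : adjoint Sinv f = adjoint Sinv (S (Sinv f)) := by rw [hS1f]
    rw [h1]
    have := congrArg (fun (T : L2R →L[ℂ] L2R) => T (Sinv f)) hSinvS1
    simpa using this
  have hSinvinner : ∀ x y : L2R, (⟪Sinv x, y⟫ : ℂ) = ⟪x, Sinv y⟫ := by
    intro x y
    conv_lhs => rw [← hSinvadj]
    exact adjoint_inner_left Sinv y x
  -- the candidate analysis operator of the approximately dual system
  set V : L2R →L[ℂ] GLtwo := U ∘L (Sinv ∘L A) - U + Ud ∘L S with hVdef
  have hVan : ∀ (f : L2R) (i : ℤ × ℤ), V f i = (⟪P i gad, f⟫ : ℂ) := by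
    intro f i
    have hv0 : V f = U (Sinv (A f)) - U f + Ud (S f) := by
      rw [hVdef]
      simp only [ContinuousLinearMap.add_apply, ContinuousLinearMap.sub_apply, comp_apply]
    have hco : ((U (Sinv (A f)) - U f + Ud (S f) : GLtwo) : (ℤ × ℤ) → ℂ) i
        = U (Sinv (A f)) i - U f i + Ud (S f) i := by
      simp [lp.coeFn_add, lp.coeFn_sub]
    have hv : V f i = (⟪P i g, Sinv (A f)⟫ : ℂ) - ⟪P i g, f⟫ + ⟪P i gd, S f⟫ := by
      rw [hv0, hco, hU', hU', hUd']
    have hsplit : P i gad = P i (adjoint A (Sinv g)) - P i g + P i (S gd) := by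
      rw [hgad, map_add, map_sub]
    have t1 : (⟪P i (adjoint A (Sinv g)), f⟫ : ℂ) = ⟪P i g, Sinv (A f)⟫ := by
      have hmove1 : P i (adjoint A (Sinv g)) = adjoint A (Sinv (P i g)) := by
        have h' := congrArg (fun (T : L2R →L[ℂ] L2R) => T (Sinv g)) (hA'P i)
        simp only [comp_apply] at h'
        rw [← h', hSinvPf]
      rw [hmove1, adjoint_inner_left A f (Sinv (P i g)), hSinvinner]
    have t3 : (⟪P i (S gd), f⟫ : ℂ) = ⟪P i gd, S f⟫ := by
      rw [← hSPf i gd, hSinner]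
    rw [hv, hsplit, inner_add_left, inner_sub_left, t1, t3]
  have hVeq : adjoint U ∘L V = A := by
    refine ContinuousLinearMap.ext fun f => ?_
    have hv0 : V f = U (Sinv (A f)) - U f + Ud (S f) := by
      rw [hVdef]
      simp only [ContinuousLinearMap.add_apply, ContinuousLinearMap.sub_apply, comp_apply]
    have h1 : (adjoint U ∘L V) f
        = adjoint U (U (Sinv (A f))) - adjoint U (U f) + adjoint U (Ud (S f)) := by
      show adjoint U (V f) = _
      rw [hv0, map_add, map_sub]
    have h2 : adjoint U (U (Sinv (A f))) = A f := hS1f (A f)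
    have h3 : adjoint U (Ud (S f)) = S f := by
      have := congrArg (fun (T : L2R →L[ℂ] L2R) => T (S f)) hdual
      simpa using this
    have h4 : adjoint U (U f) = S f := rfl
    rw [h1, h2, h3, h4]
    show A f - S f + S f = A f
    exact sub_add_cancel _ _
  refine ⟨‖V‖ ^ 2, V, ?_, ?_, ?_, hVeq⟩
  · -- Bessel bound
    intro f
    have key : ∀ i : ℤ × ℤ, (⟪E (i.1 * b) (Tr (i.2 * a) gad), f⟫ : ℂ) = V f i :=
      fun i => (hVan f i).symm
    have h2 : ((2 : ℝ≥0∞)).toReal = ((2 : ℕ) : ℝ) := by norm_num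
    constructor
    · have hs := (lp.memℓp (V f)).summable (p := (2 : ℝ≥0∞)) (by norm_num)
      simp only [h2, Real.rpow_natCast] at hs
      simp only [key]
      exact hs
    · have hnorm := lp.norm_rpow_eq_tsum (p := (2 : ℝ≥0∞)) (by norm_num) (V f)
      simp only [h2, Real.rpow_natCast] at hnorm
      simp only [key]
      rw [← hnorm]
      calc ‖V f‖ ^ 2 ≤ (‖V‖ * ‖f‖) ^ 2 :=
            pow_le_pow_left₀ (norm_nonneg _) (V.le_opNorm f) 2
        _ = ‖V‖ ^ 2 * ‖f‖ ^ 2 := mul_pow _ _ _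
  · -- analysis operator
    intro f i
    exact hVan f i
  · -- approximate duality
    rw [hVeq]
    exact hA
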